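/- Let [i,j]⊤ = {z ∈ B : i ≤ z ≤ j} be a top interval of the bipath poset (i, j ∈ {1,...,n−1}, i ≤ j). Then the restriction of the interval module k[i,j]⊤ along the covering map decomposes as the direct sum over k ∈ ℤ of interval modules k[kN+i, kN+j+1)_ZZ, where [a,b)_ZZ = {(c,d) ∈ ZZ : a ≤ d < b} and N = n+m−1. -/

import Mathlib

open CategoryTheory CategoryTheory.Limits

def ZZ : Type := {p : ℤᵒᵈ × ℤ // OrderDual.ofDual p.1 = p.2 ∨ OrderDual.ofDual p.1 = p.2 + 1}

noncomputable instance : PartialOrder ZZ := Subtype.partialOrder _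

def ZZ.a (p : ZZ) : ℤ := OrderDual.ofDual p.1.1
def ZZ.b (p : ZZ) : ℤ := p.1.2

def Bipath (n m : ℕ) : Type := {z : ℕ // z < n + m}

def bipathLE (n : ℕ) (x y : ℕ) : Prop :=
  x = y ∨ (0 < n ∧ ((x ≤ y ∧ y ≤ n) ∨ (n ≤ y ∧ y ≤ x) ∨ x = 0 ∨ y = n))

lemma bipathLE_refl (n x : ℕ) : bipathLE n x x := by unfold bipathLE; omega

lemma bipathLE_trans {n x y z : ℕ} (h1 : bipathLE n x y) (h2 : bipathLE n y z) :
    bipathLE n x z := by unfold bipathLE at *; omega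

lemma bipathLE_antisymm {n x y : ℕ} (h1 : bipathLE n x y) (h2 : bipathLE n y x) :
    x = y := by unfold bipathLE at *; omega

instance (n m : ℕ) : PartialOrder (Bipath n m) where
  le x y := bipathLE n x.1 y.1
  le_refl x := bipathLE_refl n x.1
  le_trans _ _ _ h1 h2 := bipathLE_trans h1 h2
  le_antisymm _ _ h1 h2 := Subtype.ext (bipathLE_antisymm h1 h2)

def zetaFun (n m : ℕ) (a b : ℤ) : ℕ :=
  if b % ((n : ℤ) + m - 1) = 0 then (if a = b then n + m - 1 else 0)
  else if a = b then (b % ((n : ℤ) + m - 1)).toNat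
  else if b % ((n : ℤ) + m - 1) ≤ (n : ℤ) - 1 then (b % ((n : ℤ) + m - 1)).toNat
  else (b % ((n : ℤ) + m - 1)).toNat + 1

lemma zetaFun_lt (n m : ℕ) (hn : 1 < n) (hm : 1 < m) (a b : ℤ) :
    zetaFun n m a b < n + m := by
  unfold zetaFun
  have hN : (0:ℤ) < (n : ℤ) + m - 1 := by omega
  have h1 := Int.emod_nonneg b (by omega : ((n:ℤ) + m - 1) ≠ 0)
  have h2 := Int.emod_lt_of_pos b hN
  split_ifs <;> omega

def zeta (n m : ℕ) (hn : 1 < n) (hm : 1 < m) (p : ZZ) : Bipath n m :=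
  ⟨zetaFun n m p.a p.b, zetaFun_lt n m hn hm _ _⟩
open CategoryTheory CategoryTheory.Limits
open scoped Classical

section IntervalModule
variable (k : Type) [Field k] {P : Type} [Preorder P]

/-- Convexity of a subset of a poset. -/
def IsConvexIn (I : Set P) : Prop :=
  ∀ ⦃p z q : P⦄, p ∈ I → q ∈ I → p ≤ z → z ≤ q → z ∈ I

/-- Connectedness of a subset of a poset: any two points are joined by a
zigzag of comparabilities inside the subset. -/
def IsConnectedIn (I : Set P) : Prop :=
  ∀ x ∈ I, ∀ y ∈ I,
    Relation.ReflTransGen (fun a b => a ∈ I ∧ b ∈ I ∧ (a ≤ b ∨ b ≤ a)) x y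

/-- An interval of a poset: a nonempty convex connected subset. -/
structure IsIntervalIn (I : Set P) : Prop where
  nonempty : I.Nonempty
  convex : IsConvexIn I
  connected : IsConnectedIn I

/-- The fiber of the interval module at a point: `k` if `p ∈ I`, `0` otherwise. -/
def intervalFiber (I : Set P) (p : P) : Submodule k k where
  carrier := {x : k | p ∉ I → x = 0}
  add_mem' := by intro a b ha hb h; rw [ha h, hb h, add_zero]
  zero_mem' := fun _ => rfl
  smul_mem' := by intro c x hx h; rw [smul_eq_mul, hx h, mul_zero]

/-- Internal maps of the interval module. -/
noncomputable def intervalMap (I : Set P) (p q : P) :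
    intervalFiber k I p →ₗ[k] intervalFiber k I q where
  toFun x := ⟨if q ∈ I then x.1 else 0, fun hq => if_neg hq⟩
  map_add' x y := by apply Subtype.ext; by_cases hq : q ∈ I <;> simp [hq]
  map_smul' c x := by apply Subtype.ext; by_cases hq : q ∈ I <;> simp [hq]

/-- The interval module `kI` supported on a convex subset `I`:
it is `k` on `I` with identity internal maps, and `0` elsewhere. -/
noncomputable def intervalModule (I : Set P) (hI : IsConvexIn I) : P ⥤ ModuleCat k where
  obj p := ModuleCat.of k (intervalFiber k I p)
  map {p q} _ := ModuleCat.ofHom (intervalMap k I p q)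
  map_id p := by
    ext x
    show (if p ∈ I then x.1 else 0) = x.1
    by_cases hp : p ∈ I
    · simp [hp]
    · simp [hp, x.2 hp]
  map_comp {p q r} f g := by
    ext x
    show (if r ∈ I then x.1 else 0) = (if r ∈ I then (if q ∈ I then x.1 else 0) else 0)
    by_cases hr : r ∈ I
    · by_cases hq : q ∈ I
      · simp [hr, hq]
      · have hp : p ∉ I := fun hp => hq (hI hp hr f.le g.le)
        simp [hr, hq, x.2 hp]
    · simp [hr]

end IntervalModule

/-- The restriction functor along a monotone map, by precomposition. -/
noncomputable def restrictAlong (k : Type) [Field k] {P Q : Type} [Preorder P] [Preorder Q]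
    {f : P → Q} (hf : Monotone f) : (Q ⥤ ModuleCat k) ⥤ (P ⥤ ModuleCat k) :=
  (Functor.whiskeringLeft _ _ _).obj hf.functor


lemma ZZ.le_iff {p q : ZZ} : p ≤ q ↔ q.a ≤ p.a ∧ p.b ≤ q.b := Iff.rfl

/-- Translation of a zigzag point by `z * N` in both coordinates. -/
def ZZ.translate (N z : ℤ) (p : ZZ) : ZZ :=
  ⟨(OrderDual.toDual (p.a + z * N), p.b + z * N), by
    rcases p.2 with h | h
    · left; show p.a + z * N = p.b + z * N; unfold ZZ.a ZZ.b at *; omega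
    · right; show p.a + z * N = p.b + z * N + 1; unfold ZZ.a ZZ.b at *; omega⟩

/-- The interval `[a,b]_ZZ = {(c,d) ∈ ZZ : c ≤ b, d ≥ a}`. -/
def zzIcc (a b : ℤ) : Set ZZ := {p | p.a ≤ b ∧ a ≤ p.b}
/-- The interval `[a,b)_ZZ = {(c,d) ∈ ZZ : a ≤ d < b}`. -/
def zzIco (a b : ℤ) : Set ZZ := {p | a ≤ p.b ∧ p.b < b}
/-- The interval `(a,b]_ZZ = {(c,d) ∈ ZZ : a < c ≤ b}`. -/
def zzIoc (a b : ℤ) : Set ZZ := {p | a < p.a ∧ p.a ≤ b}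
/-- The interval `(a,b)_ZZ = {(c,d) ∈ ZZ : c > a, d < b}`. -/
def zzIoo (a b : ℤ) : Set ZZ := {p | a < p.a ∧ p.b < b}

lemma zzIcc_convex (a b : ℤ) : IsConvexIn (zzIcc a b) := by
  intro p z q hp hq hpz hzq
  exact ⟨le_trans (ZZ.le_iff.1 hpz).1 hp.1, le_trans hp.2 (ZZ.le_iff.1 hpz).2⟩

lemma zzIco_convex (a b : ℤ) : IsConvexIn (zzIco a b) := by
  intro p z q hp hq hpz hzq
  exact ⟨le_trans hp.1 (ZZ.le_iff.1 hpz).2, lt_of_le_of_lt (ZZ.le_iff.1 hzq).2 hq.2⟩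

lemma zzIoc_convex (a b : ℤ) : IsConvexIn (zzIoc a b) := by
  intro p z q hp hq hpz hzq
  exact ⟨lt_of_lt_of_le hq.1 (ZZ.le_iff.1 hzq).1, le_trans (ZZ.le_iff.1 hpz).1 hp.2⟩

lemma zzIoo_convex (a b : ℤ) : IsConvexIn (zzIoo a b) := by
  intro p z q hp hq hpz hzq
  exact ⟨lt_of_lt_of_le hq.1 (ZZ.le_iff.1 hzq).1, lt_of_le_of_lt (ZZ.le_iff.1 hzq).2 hq.2⟩

section ConvexLemmas
variable {P : Type} [Preorder P]

lemma isConvex_univ : IsConvexIn (Set.univ : Set P) := fun _ _ _ _ _ _ _ => trivial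

lemma isConvex_lower2 (a b : P) : IsConvexIn {z : P | z ≤ a ∨ z ≤ b} := by
  intro p z q hp hq hpz hzq
  rcases hq with h | h
  · exact Or.inl (le_trans hzq h)
  · exact Or.inr (le_trans hzq h)

lemma isConvex_upper2 (a b : P) : IsConvexIn {z : P | a ≤ z ∨ b ≤ z} := by
  intro p z q hp hq hpz hzq
  rcases hp with h | h
  · exact Or.inl (le_trans h hpz)
  · exact Or.inr (le_trans h hpz)

lemma isConvex_Icc (a b : P) : IsConvexIn {z : P | a ≤ z ∧ z ≤ b} :=
  fun _ _ _ hp hq hpz hzq => ⟨le_trans hp.1 hpz, le_trans hzq hq.2⟩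

end ConvexLemmas

section Decomposition

variable {n m : ℕ}

lemma ZZ.prop (p : ZZ) : p.a = p.b ∨ p.a = p.b + 1 := p.2

lemma ZZ.b_le {p q : ZZ} (h : p ≤ q) : p.b ≤ q.b ∧ q.b ≤ p.b + 1 := by
  obtain ⟨h1, h2⟩ := ZZ.le_iff.1 h
  have hp := p.prop; have hq := q.prop
  omega

lemma int_emod_shift (Nz z x : ℤ) (h0 : 0 ≤ x) (h1 : x < Nz) : (z * Nz + x) % Nz = x := by
  rw [add_comm, mul_comm, Int.add_mul_emod_self_left, Int.emod_eq_of_lt h0 h1]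

lemma int_ediv_shift (Nz z x : ℤ) (h0 : 0 ≤ x) (h1 : x < Nz) : (z * Nz + x) / Nz = z := by
  rw [add_comm, mul_comm, Int.add_mul_ediv_left _ _ (by omega : Nz ≠ 0),
    Int.ediv_eq_zero_of_lt h0 h1, zero_add]

/-- The target interval set in `ZZ`. -/
abbrev iSet (n m : ℕ) (i j : Bipath n m) (z : ℤ) : Set ZZ :=
  zzIco (z * ((n:ℤ)+m-1) + i.1) (z * ((n:ℤ)+m-1) + j.1 + 1)

lemma memI_iff (i j : Bipath n m) (z : ℤ) (p : ZZ) :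
    p ∈ iSet n m i j z ↔
      z * ((n:ℤ)+m-1) + i.1 ≤ p.b ∧ p.b ≤ z * ((n:ℤ)+m-1) + j.1 := by
  show _ ≤ _ ∧ _ < _ ↔ _
  omega

lemma memJ_iff (hn : 1 < n) (hm : 1 < m) (i j : Bipath n m)
    (hi : 1 ≤ i.1) (hij : i.1 ≤ j.1) (hj : j.1 ≤ n - 1) (p : ZZ) :
    (zeta n m hn hm p ∈ {z : Bipath n m | i ≤ z ∧ z ≤ j}) ↔
      ((i.1:ℤ) ≤ p.b % ((n:ℤ)+m-1) ∧ p.b % ((n:ℤ)+m-1) ≤ (j.1:ℤ)) := by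
  have hab := p.prop
  have h0 : 0 ≤ p.b % ((n:ℤ)+m-1) := Int.emod_nonneg _ (by omega)
  have h1 : p.b % ((n:ℤ)+m-1) < (n:ℤ)+m-1 := Int.emod_lt_of_pos _ (by omega)
  show (bipathLE n i.1 (zetaFun n m p.a p.b) ∧ bipathLE n (zetaFun n m p.a p.b) j.1) ↔ _
  unfold zetaFun bipathLE
  generalize p.b % ((n:ℤ)+m-1) = r at *
  split_ifs <;> omega

lemma resid_of_memI (hn : 1 < n) (hm : 1 < m) {i j : Bipath n m}
    (hi : 1 ≤ i.1) (hij : i.1 ≤ j.1) (hj : j.1 ≤ n - 1) {z b : ℤ}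
    (h1 : z * ((n:ℤ)+m-1) + i.1 ≤ b) (h2 : b ≤ z * ((n:ℤ)+m-1) + j.1) :
    b % ((n:ℤ)+m-1) = b - z * ((n:ℤ)+m-1) ∧ b / ((n:ℤ)+m-1) = z := by
  have hb : b = z * ((n:ℤ)+m-1) + (b - z * ((n:ℤ)+m-1)) := by ring
  have h0 : (0:ℤ) ≤ b - z * ((n:ℤ)+m-1) := by omega
  have hlt : b - z * ((n:ℤ)+m-1) < (n:ℤ)+m-1 := by omega
  constructor
  · rw [hb, int_emod_shift _ _ _ h0 hlt]; ring
  · rw [hb, int_ediv_shift _ _ _ h0 hlt]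

lemma memI_div (hn : 1 < n) (hm : 1 < m) {i j : Bipath n m}
    (hi : 1 ≤ i.1) (hij : i.1 ≤ j.1) (hj : j.1 ≤ n - 1) {b : ℤ}
    (h1 : (i.1:ℤ) ≤ b % ((n:ℤ)+m-1)) (h2 : b % ((n:ℤ)+m-1) ≤ (j.1:ℤ)) :
    (b / ((n:ℤ)+m-1)) * ((n:ℤ)+m-1) + i.1 ≤ b ∧
      b ≤ (b / ((n:ℤ)+m-1)) * ((n:ℤ)+m-1) + j.1 := by
  have key := Int.mul_ediv_add_emod b ((n:ℤ)+m-1)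
  rw [mul_comm] at key
  generalize b / ((n:ℤ)+m-1) * ((n:ℤ)+m-1) = t at *
  omega

/-- If `p ∈ I_z` then `ζ p ∈ [i,j]`. -/
lemma memJ_of_memI (hn : 1 < n) (hm : 1 < m) {i j : Bipath n m}
    (hi : 1 ≤ i.1) (hij : i.1 ≤ j.1) (hj : j.1 ≤ n - 1) {z : ℤ} {p : ZZ}
    (h : p ∈ iSet n m i j z) :
    zeta n m hn hm p ∈ {z : Bipath n m | i ≤ z ∧ z ≤ j} := by
  rw [memI_iff] at h
  have := resid_of_memI hn hm hi hij hj h.1 h.2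
  rw [memJ_iff hn hm i j hi hij hj]
  omega

/-- If `ζ p ∈ [i,j]` then `p ∈ I_{p.b / N}`. -/
lemma memI_of_memJ (hn : 1 < n) (hm : 1 < m) {i j : Bipath n m}
    (hi : 1 ≤ i.1) (hij : i.1 ≤ j.1) (hj : j.1 ≤ n - 1) {p : ZZ}
    (h : zeta n m hn hm p ∈ {z : Bipath n m | i ≤ z ∧ z ≤ j}) :
    p ∈ iSet n m i j (p.b / ((n:ℤ)+m-1)) := by
  rw [memJ_iff hn hm i j hi hij hj] at h
  rw [memI_iff]
  exact memI_div hn hm hi hij hj h.1 h.2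

lemma memI_unique (hn : 1 < n) (hm : 1 < m) {i j : Bipath n m}
    (hi : 1 ≤ i.1) (hij : i.1 ≤ j.1) (hj : j.1 ≤ n - 1) {z : ℤ} {p : ZZ}
    (h : p ∈ iSet n m i j z) : z = p.b / ((n:ℤ)+m-1) := by
  rw [memI_iff] at h
  exact ((resid_of_memI hn hm hi hij hj h.1 h.2).2).symm

/-- Downward closedness within fibers of the zigzag. -/
lemma not_memI_of (hn : 1 < n) (hm : 1 < m) {i j : Bipath n m}
    (hi : 1 ≤ i.1) (hij : i.1 ≤ j.1) (hj : j.1 ≤ n - 1) {z : ℤ} {p q : ZZ}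
    (hpq : p ≤ q) (hq : zeta n m hn hm q ∈ {z : Bipath n m | i ≤ z ∧ z ≤ j})
    (hqn : q ∉ iSet n m i j z) : p ∉ iSet n m i j z := by
  intro hp
  rw [memI_iff] at hp hqn
  rw [memJ_iff hn hm i j hi hij hj] at hq
  have hb := ZZ.b_le hpq
  have hqb : q.b = z * ((n:ℤ)+m-1) + ((j.1:ℤ)+1) := by omega
  have := int_emod_shift ((n:ℤ)+m-1) z ((j.1:ℤ)+1) (by omega) (by omega)
  rw [hqb] at hq
  omega

end Decomposition


section Helpers
variable (k : Type) [Field k] {P Q : Type} [Preorder P] [Preorder Q]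

lemma intervalModule_map_apply (I : Set P) (hI : IsConvexIn I) {p q : P} (f : p ⟶ q)
    (x : (intervalModule k I hI).obj p) :
    ((intervalModule k I hI).map f) x = intervalMap k I p q x := rfl

lemma intervalMap_coe (I : Set P) (p q : P) (x : intervalFiber k I p) :
    ((intervalMap k I p q) x : k) = if q ∈ I then (x : k) else 0 := rfl

lemma restrict_map_apply {f : P → Q} (hf : Monotone f) (M : Q ⥤ ModuleCat k) {p q : P}
    (g : p ⟶ q) (x : ((restrictAlong k hf).obj M).obj p) :
    (((restrictAlong k hf).obj M).map g) x = (M.map (hf.functor.map g)) x := rfl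

end Helpers

section CatDecomp

variable {n m : ℕ} (hn : 1 < n) (hm : 1 < m) (k : Type) [Field k]
  (hz : Monotone (zeta n m hn hm)) (i j : Bipath n m)
  (hi : 1 ≤ i.1) (hij : i.1 ≤ j.1) (hj : j.1 ≤ n - 1)

/-- The family of interval modules on the zigzag. -/
noncomputable abbrev Ffam (z : ℤ) : ZZ ⥤ ModuleCat k :=
  intervalModule k (zzIco (z * ((n:ℤ)+m-1) + i.1) (z * ((n:ℤ)+m-1) + j.1 + 1))
    (zzIco_convex _ _)

/-- The restricted top-interval module. -/
noncomputable abbrev RMod : ZZ ⥤ ModuleCat k :=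
  (restrictAlong k hz).obj (intervalModule k {z | i ≤ z ∧ z ≤ j} (isConvex_Icc i j))

/-- The inclusion of each summand. -/
noncomputable def iotaT (z : ℤ) : Ffam k i j z ⟶ RMod hn hm k hz i j where
  app p := ModuleCat.ofHom
    { toFun := fun x => ⟨x.1, fun h => x.2 fun hp => h (memJ_of_memI hn hm hi hij hj hp)⟩
      map_add' := fun _ _ => rfl
      map_smul' := fun _ _ => rfl }
  naturality p q f := by
    apply ModuleCat.hom_ext; apply LinearMap.ext; intro x
    apply Subtype.ext
    show @ite k (q ∈ iSet n m i j z) (Classical.propDecidable _) x.1 0 =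
      @ite k (zeta n m hn hm q ∈ {z : Bipath n m | i ≤ z ∧ z ≤ j}) (Classical.propDecidable _) x.1 0
    by_cases hq : q ∈ iSet n m i j z
    · rw [if_pos hq, if_pos (memJ_of_memI hn hm hi hij hj hq)]
    · rw [if_neg hq]
      by_cases hJ : zeta n m hn hm q ∈ {z : Bipath n m | i ≤ z ∧ z ≤ j}
      · rw [if_pos hJ, x.2 (not_memI_of hn hm hi hij hj f.le hJ hq)]
      · rw [if_neg hJ]

/-- Projection onto the canonical summand. -/
noncomputable def toFiber (p : ZZ) :
    (RMod hn hm k hz i j).obj p ⟶ (Ffam k i j (p.b / ((n:ℤ)+m-1))).obj p := ModuleCat.ofHom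
  { toFun := fun x => ⟨x.1, fun h => x.2 fun hJ => h (memI_of_memJ hn hm hi hij hj hJ)⟩
    map_add' := fun _ _ => rfl
    map_smul' := fun _ _ => rfl }

/-- The restricted module is a coproduct of the interval modules. -/
noncomputable def isColimitCofan :
    IsColimit (Cofan.mk (RMod hn hm k hz i j) (iotaT hn hm k hz i j hi hij hj)) := by
  apply evaluationJointlyReflectsColimits
  intro p
  refine IsColimit.mk
    (fun s => toFiber hn hm k hz i j hi hij hj p ≫ s.ι.app ⟨p.b / ((n:ℤ)+m-1)⟩) ?_ ?_
  · rintro s ⟨z⟩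
    apply ModuleCat.hom_ext; apply LinearMap.ext; intro x
    show s.ι.app ⟨p.b / ((n:ℤ)+m-1)⟩
        (toFiber hn hm k hz i j hi hij hj p
          ((iotaT hn hm k hz i j hi hij hj z).app p x)) = s.ι.app ⟨z⟩ x
    by_cases hp : p ∈ iSet n m i j z
    · obtain rfl := memI_unique hn hm hi hij hj hp
      exact congrArg (s.ι.app _) (Subtype.ext rfl)
    · have hx : x = 0 := Subtype.ext (x.2 hp)
      rw [hx]; simp only [map_zero]
  · intro s mf w
    apply ModuleCat.hom_ext; apply LinearMap.ext; intro x
    show mf x = s.ι.app ⟨p.b / ((n:ℤ)+m-1)⟩ (toFiber hn hm k hz i j hi hij hj p x)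
    by_cases hJ : zeta n m hn hm p ∈ {z : Bipath n m | i ≤ z ∧ z ≤ j}
    · have hx : x = (iotaT hn hm k hz i j hi hij hj (p.b / ((n:ℤ)+m-1))).app p
          (toFiber hn hm k hz i j hi hij hj p x) := Subtype.ext rfl
      have hw := LinearMap.congr_fun (congrArg ModuleCat.Hom.hom (w ⟨p.b / ((n:ℤ)+m-1)⟩))
        (toFiber hn hm k hz i j hi hij hj p x)
      calc mf x = mf ((iotaT hn hm k hz i j hi hij hj (p.b / ((n:ℤ)+m-1))).app p
          (toFiber hn hm k hz i j hi hij hj p x)) := congrArg mf hx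
        _ = _ := hw
    · have hx : x = 0 := Subtype.ext (x.2 hJ)
      rw [hx]; simp only [map_zero]

end CatDecomp

/-- Restriction of a top-interval module along the covering map decomposes as
the direct sum over `k ∈ ℤ` of the interval modules `k[kN+i, kN+j+1)_ZZ`. -/
theorem restrict_top_interval (n m : ℕ) (hn : 1 < n) (hm : 1 < m)
    (k : Type) [Field k] (hz : Monotone (zeta n m hn hm))
    (i j : Bipath n m) (hi : 1 ≤ i.1) (hij : i.1 ≤ j.1) (hj : j.1 ≤ n - 1) :
    Nonempty ((restrictAlong k hz).obj
        (intervalModule k {z | i ≤ z ∧ z ≤ j} (isConvex_Icc i j)) ≅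
      ∐ fun z : ℤ =>
        intervalModule k (zzIco (z * ((n:ℤ)+m-1) + i.1) (z * ((n:ℤ)+m-1) + j.1 + 1))
          (zzIco_convex _ _)) :=
  ⟨(isColimitCofan hn hm k hz i j hi hij hj).coconePointUniqueUpToIso
    (colimit.isColimit _)⟩
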